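/- Let G be a finite simple nonabelian group and ρ a nontrivial irreducible representation of G on a finite-dimensional complex vector space W, with character χ(g) = tr(ρ(g)). Then for all h, k ∈ G and λ ∈ ℂ: if χ(γh) = λ·χ(γk) for every γ ∈ G, then h = k. In particular, the map h ↦ (χ(γh))_{γ∈G} is injective and no two of its values are proportional. -/

import Mathlib

open LinearMap Module

/-- Schur's lemma: an endomorphism commuting with an irreducible representation is scalar. -/
lemma schur_scalar' {G : Type*} [Group G]
    {W : Type*} [AddCommGroup W] [Module ℂ W] [FiniteDimensional ℂ W] [Nontrivial W]
    (ρ : Representation ℂ G W)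
    (hirr : ∀ p : Submodule ℂ W, (∀ g : G, ∀ x ∈ p, ρ g x ∈ p) → p = ⊥ ∨ p = ⊤)
    (f : Module.End ℂ W) (hf : ∀ g : G, ρ g * f = f * ρ g) :
    ∃ c : ℂ, f = c • 1 := by
  obtain ⟨c, hc⟩ := Module.End.exists_eigenvalue f
  refine ⟨c, ?_⟩
  have hinv : ∀ g : G, ∀ x ∈ f.eigenspace c, ρ g x ∈ f.eigenspace c := by
    intro g x hx
    rw [Module.End.mem_eigenspace_iff] at hx ⊢
    have := congrArg (fun φ : Module.End ℂ W => φ x) (hf g)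
    simp only [Module.End.mul_apply] at this
    rw [← this, hx, map_smul]
  rcases hirr _ hinv with h | h
  · exact absurd h hc
  · ext x
    have hx : x ∈ f.eigenspace c := h ▸ Submodule.mem_top
    rw [Module.End.mem_eigenspace_iff] at hx
    simpa using hx

/-- Averaging: `∑ γ, ρ γ * A * ρ γ⁻¹` is a scalar with trace `|G| · tr A`. -/
lemma avg_scalar' {G : Type*} [Group G] [Fintype G]
    {W : Type*} [AddCommGroup W] [Module ℂ W] [FiniteDimensional ℂ W] [Nontrivial W]
    (ρ : Representation ℂ G W)
    (hirr : ∀ p : Submodule ℂ W, (∀ g : G, ∀ x ∈ p, ρ g x ∈ p) → p = ⊥ ∨ p = ⊤)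
    (A : Module.End ℂ W) :
    ∃ c : ℂ, (∑ γ : G, ρ γ * A * ρ γ⁻¹) = c • 1 ∧
      c * (Module.finrank ℂ W : ℂ) = (Fintype.card G : ℂ) * LinearMap.trace ℂ W A := by
  set M : Module.End ℂ W := ∑ γ : G, ρ γ * A * ρ γ⁻¹ with hM
  have hcomm : ∀ g : G, ρ g * M = M * ρ g := by
    intro g
    rw [hM, Finset.mul_sum, Finset.sum_mul]
    refine Fintype.sum_equiv (Equiv.mulLeft g) _ _ ?_
    intro γ
    have h1 : ρ g * (ρ γ * A * ρ γ⁻¹) = ρ (g * γ) * A * ρ γ⁻¹ := by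
      rw [map_mul]; noncomm_ring
    have h2 : ρ (g * γ) * A * ρ (g * γ)⁻¹ * ρ g = ρ (g * γ) * A * ρ γ⁻¹ := by
      rw [mul_assoc, ← map_mul]
      congr 2
      group
    rw [h1, ← h2]
    rfl
  obtain ⟨c, hc⟩ := schur_scalar' ρ hirr M hcomm
  refine ⟨c, hc, ?_⟩
  have htr : LinearMap.trace ℂ W M = (Fintype.card G : ℂ) * LinearMap.trace ℂ W A := by
    rw [hM, map_sum]
    have : ∀ γ : G, LinearMap.trace ℂ W (ρ γ * A * ρ γ⁻¹) = LinearMap.trace ℂ W A := by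
      intro γ
      rw [LinearMap.trace_mul_comm, ← mul_assoc, ← map_mul]
      simp
    simp [this, Finset.sum_const, Finset.card_univ, nsmul_eq_mul]
  rw [← htr, hc, map_smul, LinearMap.trace_one, smul_eq_mul]

/-- If all "matrix coefficients" traces `tr (ρ γ * T)` vanish, then `T = 0`. -/
lemma trace_vanish' {G : Type*} [Group G] [Fintype G]
    {W : Type*} [AddCommGroup W] [Module ℂ W] [FiniteDimensional ℂ W] [Nontrivial W]
    (ρ : Representation ℂ G W)
    (hirr : ∀ p : Submodule ℂ W, (∀ g : G, ∀ x ∈ p, ρ g x ∈ p) → p = ⊥ ∨ p = ⊤)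
    (T : Module.End ℂ W)
    (hT : ∀ γ : G, LinearMap.trace ℂ W (ρ γ * T) = 0) : T = 0 := by
  classical
  have hd : (Module.finrank ℂ W : ℂ) ≠ 0 :=
    Nat.cast_ne_zero.mpr (Module.finrank_pos (R := ℂ) (M := W)).ne'
  have hcard : (Fintype.card G : ℂ) ≠ 0 := Nat.cast_ne_zero.mpr Fintype.card_ne_zero
  set b : Basis (Fin (Module.finrank ℂ W)) ℂ W := Module.finBasis ℂ W with hb
  have htr : ∀ φ : Module.End ℂ W, LinearMap.trace ℂ W φ = ∑ i, b.repr (φ (b i)) i := by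
    intro φ
    rw [LinearMap.trace_eq_matrix_trace ℂ b]
    simp [Matrix.trace, LinearMap.toMatrix_apply]
  have hfu : ∀ (f : Module.Dual ℂ W) (u : W), f u = ∑ j, b.repr u j * f (b j) := by
    intro f u
    conv_lhs => rw [← b.sum_repr u]
    simp only [map_sum, map_smul, smul_eq_mul]
  ext x
  rw [LinearMap.zero_apply, ← Module.forall_dual_apply_eq_zero_iff ℂ]
  intro f
  have main : ∀ i : Fin (Module.finrank ℂ W),
      (∑ γ : G, f ((ρ γ⁻¹) x) * b.repr ((ρ γ) (T (b i))) i) * (Module.finrank ℂ W : ℂ)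
        = (Fintype.card G : ℂ) * f (T (b i)) * b.repr x i := by
    intro i
    obtain ⟨c, hc1, hc2⟩ := avg_scalar' ρ hirr (f.smulRight (T (b i)))
    have htrA : LinearMap.trace ℂ W (f.smulRight (T (b i))) = f (T (b i)) := by
      rw [htr, hfu f (T (b i))]
      simp [mul_comm]
    have happ := congrArg (fun φ : Module.End ℂ W => b.repr (φ x) i) hc1
    simp only [LinearMap.sum_apply, map_sum, Module.End.mul_apply,
      LinearMap.smulRight_apply, map_smul, LinearMap.smul_apply, Module.End.one_apply,
      Finsupp.smul_apply, smul_eq_mul, Finsupp.finset_sum_apply] at happ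
    rw [happ, mul_right_comm, hc2, htrA]
  have hzero : (0 : ℂ) =
      ∑ γ : G, LinearMap.trace ℂ W (ρ γ * T) * f ((ρ γ⁻¹) x) := by
    simp [hT]
  have hswap : (0 : ℂ) =
      ∑ i, ∑ γ : G, f ((ρ γ⁻¹) x) * b.repr ((ρ γ) (T (b i))) i := by
    rw [hzero, Finset.sum_comm]
    refine Finset.sum_congr rfl fun γ _ => ?_
    rw [htr (ρ γ * T), Finset.sum_mul]
    refine Finset.sum_congr rfl fun i _ => ?_
    rw [mul_comm]
    rfl
  have hfin : (Fintype.card G : ℂ) * f (T x) = 0 := by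
    have h1 : (Fintype.card G : ℂ) * f (T x)
        = ∑ i, (Fintype.card G : ℂ) * f (T (b i)) * b.repr x i := by
      have h2 := hfu (f ∘ₗ T) x
      simp only [LinearMap.comp_apply] at h2
      rw [h2, Finset.mul_sum]
      exact Finset.sum_congr rfl fun i _ => by ring
    rw [h1, Finset.sum_congr rfl fun i _ => (main i).symm, ← Finset.sum_mul, ← hswap, zero_mul]
  rw [mul_eq_zero] at hfin
  exact hfin.resolve_left hcard

/-- Corollary 2.11 III): let `G` be a finite simple nonabelian group and `ρ` a
nontrivial irreducible representation of `G` on a finite-dimensional complex vector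
space `W`, with character `χ g = tr (ρ g)`.  If `χ (γ h) = λ · χ (γ k)` for every
`γ ∈ G`, then `h = k`. -/
theorem simple_group_character_projectively_separates
    {G : Type*} [Group G] [Fintype G] [IsSimpleGroup G]
    (hnab : ∃ a b : G, a * b ≠ b * a)
    {W : Type*} [AddCommGroup W] [Module ℂ W] [FiniteDimensional ℂ W] [Nontrivial W]
    (ρ : Representation ℂ G W)
    (hirr : ∀ p : Submodule ℂ W, (∀ g : G, ∀ x ∈ p, ρ g x ∈ p) → p = ⊥ ∨ p = ⊤)
    (hnt : ∃ g : G, ρ g ≠ 1) :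
    ∀ h k : G, ∀ l : ℂ,
      (∀ γ : G, LinearMap.trace ℂ W (ρ (γ * h)) = l * LinearMap.trace ℂ W (ρ (γ * k)))
        → h = k := by
  intro h k l hl
  -- Step 1: the traces `tr (ρ γ * (ρ h - l • ρ k))` all vanish, hence `ρ h = l • ρ k`.
  have hT : (ρ h : Module.End ℂ W) - l • ρ k = 0 := by
    refine trace_vanish' ρ hirr _ fun γ => ?_
    have hthis := hl γ
    have e1 : ρ (γ * h) = ρ γ * ρ h := map_mul ρ γ h
    have e2 : ρ (γ * k) = ρ γ * ρ k := map_mul ρ γ k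
    rw [e1, e2] at hthis
    rw [mul_sub, mul_smul_comm, map_sub, map_smul, hthis, smul_eq_mul, sub_self]
  have hρhk : (ρ h : Module.End ℂ W) = l • ρ k := by
    rwa [sub_eq_zero] at hT
  -- Step 2: `ρ (h * k⁻¹)` is the scalar `l`.
  have hz : (ρ (h * k⁻¹) : Module.End ℂ W) = l • 1 := by
    rw [map_mul, hρhk, smul_mul_assoc, ← map_mul, mul_inv_cancel, map_one]
  -- Step 3: `ρ` is injective since `G` is simple and `ρ` nontrivial.
  have hinj : Function.Injective ρ := by
    rcases (MonoidHom.normal_ker (Representation.asGroupHom ρ)).eq_bot_or_eq_top with hk' | hk'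
    · intro a b hab
      have : a * b⁻¹ ∈ (Representation.asGroupHom ρ).ker := by
        rw [MonoidHom.mem_ker]
        ext1
        rw [Representation.asGroupHom_apply, Units.val_one, map_mul, hab, ← map_mul,
          mul_inv_cancel, map_one]
      rw [hk', Subgroup.mem_bot] at this
      rwa [mul_inv_eq_one] at this
    · exfalso
      obtain ⟨g, hg⟩ := hnt
      apply hg
      have : g ∈ (Representation.asGroupHom ρ).ker := hk' ▸ Subgroup.mem_top g
      rw [MonoidHom.mem_ker] at this
      have := congrArg Units.val this
      rwa [Representation.asGroupHom_apply, Units.val_one] at this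
  -- Step 4: `h * k⁻¹` is central, hence trivial since `G` is simple nonabelian.
  have hcen : h * k⁻¹ ∈ Subgroup.center G := by
    rw [Subgroup.mem_center_iff]
    intro g
    apply hinj
    have e1 : ρ (g * (h * k⁻¹)) = ρ g * ρ (h * k⁻¹) := map_mul ρ g (h * k⁻¹)
    have e2 : ρ (h * k⁻¹ * g) = ρ (h * k⁻¹) * ρ g := map_mul ρ (h * k⁻¹) g
    rw [e1, e2, hz, smul_mul_assoc, mul_smul_comm, one_mul, mul_one]
  rcases Subgroup.Normal.eq_bot_or_eq_top (inferInstance : (Subgroup.center G).Normal) with hc | hc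
  · rw [hc, Subgroup.mem_bot, mul_inv_eq_one] at hcen
    exact hcen
  · exfalso
    obtain ⟨a, b, hab⟩ := hnab
    have : a ∈ Subgroup.center G := hc ▸ Subgroup.mem_top a
    rw [Subgroup.mem_center_iff] at this
    exact hab ((this b).symm)
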